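/- Let n ≥ 1 and let i ≥ 0, j ≥ 1 be integers. Then: (1) the multiplication map S_i ⊗ S_j → S_{i+j} is surjective; and (2) for every ℂ-subspace U with 0 ≠ U ⊊ S_i, writing U·S_j ⊆ S_{i+j} for the span of all products u·g with u ∈ U and g ∈ S_j, one has dim(U·S_j) · C(i+n, n) > dim(U) · C(i+j+n, n). (This is the translation, via global sections, of the statement that the pair of line bundles O(i), O(i+j) on ℙ^n is strongly Kronecker stable.) -/

import Mathlib

open MvPolynomial Module
open scoped Pointwise

namespace KS

variable {n : ℕ}

lemma deg_add (a b : Fin (n+1) →₀ ℕ) : (a + b).degree = a.degree + b.degree := by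
  simp only [Finsupp.degree_eq_weight_one]; exact map_add _ _ _

lemma deg_single (k : Fin (n+1)) (m : ℕ) : (Finsupp.single k m).degree = m := by
  classical
  rw [Finsupp.degree_apply]
  by_cases hm : m = 0
  · simp [hm]
  · rw [Finsupp.support_single_ne_zero _ hm]; simp

lemma deg_sum_univ (a : Fin (n+1) →₀ ℕ) : (∑ k, a k) = a.degree := by
  rw [Finsupp.degree_apply]
  exact (Finset.sum_subset (Finset.subset_univ _)
    (fun x _ hx => Finsupp.notMem_support_iff.mp hx)).symm

noncomputable def Mon (n d : ℕ) : Finset (Fin (n+1) →₀ ℕ) :=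
  Set.Finite.toFinset (show {s : Fin (n+1) →₀ ℕ | s.degree = d}.Finite from
    Set.Finite.subset (Finsupp.finite_of_degree_le d) (fun s hs => le_of_eq hs))

@[simp] lemma mem_Mon {d : ℕ} {s : Fin (n+1) →₀ ℕ} : s ∈ Mon n d ↔ s.degree = d := by
  simp [Mon]

lemma Mon_nonempty (n d : ℕ) : (Mon n d).Nonempty :=
  ⟨Finsupp.single 0 d, mem_Mon.mpr (deg_single 0 d)⟩

lemma Mon_card_pos (n d : ℕ) : 0 < (Mon n d).card :=
  Finset.card_pos.mpr (Mon_nonempty n d)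

noncomputable def monEquivSym (n d : ℕ) :
    {s : Fin (n+1) →₀ ℕ // s.degree = d} ≃ Sym (Fin (n+1)) d where
  toFun x := ⟨Finsupp.toMultiset x.1, by
    rw [Finsupp.card_toMultiset]
    simpa [Finsupp.degree_apply, Finsupp.sum] using x.2⟩
  invFun y := ⟨Multiset.toFinsupp (y : Multiset (Fin (n+1))), by
    have h := Multiset.toFinsupp_sum_eq (y : Multiset (Fin (n+1)))
    have h2 : Multiset.card (y : Multiset (Fin (n+1))) = d := y.2
    simp only [Finsupp.degree_apply, Finsupp.sum, id] at h ⊢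
    rw [h, h2]⟩
  left_inv x := Subtype.ext (Finsupp.toMultiset_toFinsupp x.1)
  right_inv y := Subtype.ext (Multiset.toFinsupp_toMultiset y.1)

lemma card_Mon (n d : ℕ) : (Mon n d).card = (d + n).choose n := by
  classical
  haveI : Fintype {s : Fin (n+1) →₀ ℕ // s.degree = d} :=
    Fintype.ofEquiv _ (monEquivSym n d).symm
  have h1 : Fintype.card {s : Fin (n+1) →₀ ℕ // s.degree = d} = (Mon n d).card :=
    Fintype.card_of_subtype (Mon n d) (fun s => mem_Mon)
  have h2 : Fintype.card {s : Fin (n+1) →₀ ℕ // s.degree = d}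
      = Fintype.card (Sym (Fin (n+1)) d) := Fintype.card_congr (monEquivSym n d)
  have h3 : Fintype.card (Sym (Fin (n+1)) d) = (Fintype.card (Fin (n+1)) + d - 1).choose d :=
    Sym.card_sym_eq_choose d
  rw [← h1, h2, h3, Fintype.card_fin]
  have h4 : n + 1 + d - 1 = d + n := by omega
  rw [h4]
  have h5 : (d + n).choose ((d+n) - d) = (d+n).choose d := Nat.choose_symm (by omega)
  have h6 : (d + n) - d = n := by omega
  rw [h6] at h5
  exact h5.symm

lemma exists_split (a : ℕ) : ∀ (s : Fin (n+1) →₀ ℕ), a ≤ s.degree →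
    ∃ u v, u + v = s ∧ u.degree = a := by
  induction a with
  | zero => exact fun s _ => ⟨0, s, by simp, by simp [Finsupp.degree]⟩
  | succ a ih =>
    intro s hs
    have h0 : s ≠ 0 := by
      rintro rfl
      simp [Finsupp.degree] at hs
    obtain ⟨k, hk⟩ : ∃ k, s k ≠ 0 := by
      by_contra h; push_neg at h; exact h0 (Finsupp.ext fun k => h k)
    have hle : Finsupp.single k 1 ≤ s := Finsupp.single_le_iff.mpr (by omega)
    have hts : s - Finsupp.single k 1 + Finsupp.single k 1 = s := tsub_add_cancel_of_le hle
    have hdt : (s - Finsupp.single k 1).degree + 1 = s.degree := by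
      conv_rhs => rw [← hts]
      rw [deg_add, deg_single]
    obtain ⟨u, v, huv, hu⟩ := ih (s - Finsupp.single k 1) (by omega)
    refine ⟨u + Finsupp.single k 1, v, ?_, by rw [deg_add, deg_single, hu]⟩
    rw [add_right_comm, huv, hts]

lemma Mon_add_Mon (a b : ℕ) : (Mon n a) + (Mon n b) = Mon n (a + b) := by
  classical
  apply Finset.Subset.antisymm
  · intro s hs
    rw [Finset.mem_add] at hs
    obtain ⟨u, hu, v, hv, rfl⟩ := hs
    rw [mem_Mon] at *
    rw [deg_add, hu, hv]
  · intro s hs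
    rw [mem_Mon] at hs
    obtain ⟨u, v, rfl, hu⟩ := exists_split a s (by omega)
    have hv : v.degree = b := by have := deg_add u v; omega
    exact Finset.add_mem_add (mem_Mon.mpr hu) (mem_Mon.mpr hv)

lemma single_mem_Mon_one (k : Fin (n+1)) : Finsupp.single k 1 ∈ Mon n 1 :=
  mem_Mon.mpr (deg_single k 1)


lemma exists_swap {i : ℕ} {T : Finset (Fin (n+1) →₀ ℕ)} (hT : T ⊆ Mon n i)
    {b : Fin (n+1) →₀ ℕ} (hbMon : b ∈ Mon n i) (hbT : b ∉ T) :
    ∀ D : ℕ, ∀ a ∈ T, (∑ k, ((a k - b k) + (b k - a k))) = D →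
    ∃ m ∈ T, ∃ k l, 1 ≤ m l ∧ m + Finsupp.single k 1 - Finsupp.single l 1 ∉ T := by
  intro D
  induction D using Nat.strong_induction_on with
  | _ D ih =>
    intro a haT haD
    have hab : a ≠ b := fun h => hbT (h ▸ haT)
    have hdega : a.degree = i := mem_Mon.mp (hT haT)
    have hdegb : b.degree = i := mem_Mon.mp hbMon
    have hsum : (∑ k, a k) = ∑ k, b k := by
      rw [deg_sum_univ, deg_sum_univ, hdega, hdegb]
    have hk : ∃ k, a k < b k := by
      by_contra h; push_neg at h
      refine hab (Finsupp.ext fun k => ?_)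
      exact ((Finset.sum_eq_sum_iff_of_le (fun k _ => h k)).mp hsum.symm k (Finset.mem_univ k)).symm
    have hl : ∃ l, b l < a l := by
      by_contra h; push_neg at h
      refine hab (Finsupp.ext fun k => ?_)
      exact (Finset.sum_eq_sum_iff_of_le (fun k _ => h k)).mp hsum k (Finset.mem_univ k)
    obtain ⟨k, hk⟩ := hk; obtain ⟨l, hl⟩ := hl
    have hkl : k ≠ l := by intro h; subst h; omega
    set a' := a + Finsupp.single k 1 - Finsupp.single l 1 with ha'
    by_cases ha'T : a' ∈ T
    · have ha'k : a' k = a k + 1 := by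
        simp [ha', Finsupp.tsub_apply, Finsupp.add_apply, Finsupp.single_eq_same,
          Finsupp.single_eq_of_ne' (Ne.symm hkl)]
      have ha'l : a' l = a l - 1 := by
        simp [ha', Finsupp.tsub_apply, Finsupp.add_apply, Finsupp.single_eq_same,
          Finsupp.single_eq_of_ne' hkl]
      have ha'm : ∀ m, m ≠ k → m ≠ l → a' m = a m := by
        intro m hmk hml
        simp [ha', Finsupp.tsub_apply, Finsupp.add_apply, Finsupp.single_apply,
          Ne.symm hmk, Ne.symm hml]
      have hlt : (∑ m, ((a' m - b m) + (b m - a' m))) < D := by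
        rw [← haD]
        apply Finset.sum_lt_sum
        · intro m _
          rcases eq_or_ne m k with rfl | hmk
          · rw [ha'k]; omega
          rcases eq_or_ne m l with rfl | hml
          · rw [ha'l]; omega
          · rw [ha'm m hmk hml]
        · exact ⟨k, Finset.mem_univ k, by rw [ha'k]; omega⟩
      exact ih _ hlt a' ha'T rfl
    · exact ⟨a, haT, k, l, by omega, ha'T⟩

lemma shadow_one {i : ℕ} {T : Finset (Fin (n+1) →₀ ℕ)} (hT : T ⊆ Mon n i)
    (hne : T.Nonempty) (hproper : T ≠ Mon n i) :
    T.card * (i + (n+1)) < (T + Mon n 1).card * (i + 1) := by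
  classical
  set w : (Fin (n+1) →₀ ℕ) × Fin (n+1) → ℕ := fun p => p.1 p.2 with hw
  set ψ : (Fin (n+1) →₀ ℕ) × Fin (n+1) → (Fin (n+1) →₀ ℕ) × Fin (n+1) :=
    fun p => (p.1 + Finsupp.single p.2 1, p.2) with hψ
  have hψinj : Function.Injective ψ := by
    rintro ⟨m, k⟩ ⟨m', k'⟩ h
    simp only [hψ, Prod.mk.injEq] at h
    obtain ⟨h1, rfl⟩ := h
    exact Prod.ext (add_right_cancel h1) rfl
  have hsub1 : T + Mon n 1 ⊆ Mon n (i+1) := by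
    rw [← Mon_add_Mon]
    exact Finset.add_subset_add_right hT
  have hL : (∑ p ∈ (T ×ˢ Finset.univ), w (ψ p)) = T.card * (i + (n+1)) := by
    rw [Finset.sum_product]
    have hrow : ∀ m ∈ T, (∑ k, w (ψ (m, k))) = i + (n+1) := by
      intro m hm
      have hdm : m.degree = i := mem_Mon.mp (hT hm)
      have hterm : ∀ k, w (ψ (m, k)) = m k + 1 := fun k => by
        simp [hw, hψ, Finsupp.add_apply, Finsupp.single_apply]
      rw [Finset.sum_congr rfl (fun k _ => hterm k), Finset.sum_add_distrib,
        deg_sum_univ, hdm]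
      simp
    rw [Finset.sum_congr rfl hrow, Finset.sum_const, smul_eq_mul]
  set A := (T ×ˢ (Finset.univ : Finset (Fin (n+1)))).image ψ with hA
  have hAsum : (∑ p ∈ A, w p) = T.card * (i + (n+1)) := by
    rw [hA, Finset.sum_image (fun x _ y _ h => hψinj h)]; exact hL
  have hAsub : A ⊆ (T + Mon n 1) ×ˢ Finset.univ := by
    intro p hp
    simp only [hA, Finset.mem_image] at hp
    obtain ⟨⟨m, k⟩, hmk, rfl⟩ := hp
    rw [Finset.mem_product] at hmk ⊢
    exact ⟨Finset.add_mem_add hmk.1 (single_mem_Mon_one k), Finset.mem_univ _⟩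
  obtain ⟨b, hbMon, hbT⟩ : ∃ b ∈ Mon n i, b ∉ T :=
    Finset.exists_of_ssubset (lt_of_le_of_ne hT hproper)
  obtain ⟨a, haT⟩ := hne
  obtain ⟨m₀, hm₀T, k, l, hm₀l, hm₀swap⟩ := exists_swap hT hbMon hbT _ a haT rfl
  set pstar : (Fin (n+1) →₀ ℕ) × Fin (n+1) := (m₀ + Finsupp.single k 1, l) with hpstar
  have hpmem : pstar ∈ (T + Mon n 1) ×ˢ Finset.univ := by
    rw [Finset.mem_product]
    exact ⟨Finset.add_mem_add hm₀T (single_mem_Mon_one k), Finset.mem_univ _⟩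
  have hpA : pstar ∉ A := by
    intro hp
    simp only [hA, Finset.mem_image] at hp
    obtain ⟨⟨m, k'⟩, hmk, heq⟩ := hp
    rw [Finset.mem_product] at hmk
    simp only [hψ, hpstar, Prod.mk.injEq] at heq
    obtain ⟨h1, rfl⟩ := heq
    have hm : m = m₀ + Finsupp.single k 1 - Finsupp.single k' 1 := eq_tsub_of_add_eq h1
    exact hm₀swap (hm ▸ hmk.1)
  have hpw : 0 < w pstar := by
    simp only [hw, hpstar, Finsupp.add_apply, Finsupp.single_apply]
    split <;> omega
  have hstrict : (∑ p ∈ A, w p) < ∑ p ∈ (T + Mon n 1) ×ˢ Finset.univ, w p :=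
    Finset.sum_lt_sum_of_subset hAsub hpmem hpA hpw (fun _ _ _ => Nat.zero_le _)
  have hR : (∑ p ∈ (T + Mon n 1) ×ˢ Finset.univ, w p) = (T + Mon n 1).card * (i + 1) := by
    rw [Finset.sum_product]
    have hrow : ∀ m' ∈ T + Mon n 1, (∑ k, w (m', k)) = i + 1 := by
      intro m' hm'
      have hdm : m'.degree = i + 1 := mem_Mon.mp (hsub1 hm')
      simpa [hw, deg_sum_univ] using hdm
    rw [Finset.sum_congr rfl hrow, Finset.sum_const, smul_eq_mul]
  rw [hAsum, hR] at hstrict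
  exact hstrict

lemma card_identity (n i : ℕ) :
    (Mon n (i+1)).card * (i+1) = (Mon n i).card * (i + (n+1)) := by
  rw [card_Mon, card_Mon]
  have h1 := Nat.add_one_mul_choose_eq (i + n) i
  have h2 : (i + n).choose i = (i + n).choose n := by
    have h := Nat.choose_symm (n := i + n) (k := i) (by omega)
    rw [show i + n - i = n from by omega] at h
    exact h.symm
  have h3 : (i + 1 + n).choose n = (i + n + 1).choose (i + 1) := by
    have h := Nat.choose_symm (n := i + n + 1) (k := i + 1) (by omega)
    rw [show i + n + 1 - (i + 1) = n from by omega] at h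
    rw [show i + 1 + n = i + n + 1 from by omega]
    exact h
  rw [h3]
  rw [h2] at h1
  rw [show i + (n+1) = i + n + 1 from by omega, mul_comm ((i+n).choose n) (i+n+1)]
  exact h1.symm

lemma shadow_one_card {i : ℕ} {T : Finset (Fin (n+1) →₀ ℕ)} (hT : T ⊆ Mon n i)
    (hne : T.Nonempty) (hproper : T ≠ Mon n i) :
    T.card * (Mon n (i+1)).card < (T + Mon n 1).card * (Mon n i).card := by
  have h := shadow_one hT hne hproper
  have hpos : 0 < (Mon n i).card := Mon_card_pos n i
  refine lt_of_mul_lt_mul_right ?_ (Nat.zero_le (i+1))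
  calc T.card * (Mon n (i+1)).card * (i+1)
      = T.card * ((Mon n (i+1)).card * (i+1)) := by ring
    _ = T.card * ((Mon n i).card * (i + (n+1))) := by rw [card_identity]
    _ = (T.card * (i + (n+1))) * (Mon n i).card := by ring
    _ < ((T + Mon n 1).card * (i + 1)) * (Mon n i).card := by
        exact (Nat.mul_lt_mul_right hpos).mpr h
    _ = (T + Mon n 1).card * (Mon n i).card * (i+1) := by ring

lemma shadow_gen : ∀ (j : ℕ), 1 ≤ j → ∀ (i : ℕ) (T : Finset (Fin (n+1) →₀ ℕ)),
    T ⊆ Mon n i → T.Nonempty → T ≠ Mon n i →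
    T.card * (Mon n (i+j)).card < (T + Mon n j).card * (Mon n i).card := by
  intro j
  induction j with
  | zero => omega
  | succ j ih =>
    intro _ i T hT hne hpr
    rcases Nat.eq_zero_or_pos j with rfl | hj
    · exact shadow_one_card hT hne hpr
    have hsub1 : T + Mon n 1 ⊆ Mon n (i+1) := by
      rw [← Mon_add_Mon]; exact Finset.add_subset_add_right hT
    have hassoc : T + Mon n (j+1) = (T + Mon n 1) + Mon n j := by
      rw [add_assoc, Mon_add_Mon, show 1 + j = j + 1 from by omega]
    by_cases hfull : T + Mon n 1 = Mon n (i+1)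
    · have hfull2 : T + Mon n (j+1) = Mon n (i+(j+1)) := by
        rw [hassoc, hfull, Mon_add_Mon, show i + 1 + j = i + (j+1) from by omega]
      rw [hfull2]
      have hBlt : T.card < (Mon n i).card :=
        Finset.card_lt_card (lt_of_le_of_ne hT hpr)
      calc T.card * (Mon n (i+(j+1))).card
          < (Mon n i).card * (Mon n (i+(j+1))).card :=
            (Nat.mul_lt_mul_right (Mon_card_pos n (i+(j+1)))).mpr hBlt
        _ = (Mon n (i+(j+1))).card * (Mon n i).card := by ring
    · have h1 := shadow_one_card hT hne hpr
      have h2 := ih hj (i+1) (T + Mon n 1) hsub1 (hne.add (Mon_nonempty n 1)) hfull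
      rw [show i + 1 + j = i + (j+1) from by omega] at h2
      have hCpos : 0 < (T + Mon n 1).card :=
        Finset.card_pos.mpr (hne.add (Mon_nonempty n 1))
      have hrpos : 0 < (Mon n (i+1)).card := Mon_card_pos n _
      rw [hassoc]
      refine lt_of_mul_lt_mul_right ?_
        (Nat.zero_le ((T + Mon n 1).card * (Mon n (i+1)).card))
      calc T.card * (Mon n (i+(j+1))).card * ((T + Mon n 1).card * (Mon n (i+1)).card)
          = (T.card * (Mon n (i+1)).card) * ((T + Mon n 1).card * (Mon n (i+(j+1))).card) := by
            ring
        _ < ((T + Mon n 1).card * (Mon n i).card) *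
              (((T + Mon n 1) + Mon n j).card * (Mon n (i+1)).card) := by
            exact Nat.mul_lt_mul'' h1 h2
        _ = ((T + Mon n 1) + Mon n j).card * (Mon n i).card *
              ((T + Mon n 1).card * (Mon n (i+1)).card) := by ring


/-! ### Leading monomials in lex order -/

abbrev Px (n : ℕ) := MvPolynomial (Fin (n+1)) ℂ

lemma toLex_add' (a b : Fin (n+1) →₀ ℕ) :
    toLex (a + b) = toLex a + toLex b := rfl

noncomputable def lmSet (f : Px n) : Finset (Lex (Fin (n+1) →₀ ℕ)) :=
  f.support.map (toLex : (Fin (n+1) →₀ ℕ) ≃ Lex (Fin (n+1) →₀ ℕ)).toEmbedding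

lemma lmSet_nonempty {f : Px n} (hf : f ≠ 0) : (lmSet f).Nonempty := by
  rw [lmSet, Finset.map_nonempty]
  exact MvPolynomial.support_nonempty.mpr hf

noncomputable def lm (f : Px n) (hf : f ≠ 0) : Fin (n+1) →₀ ℕ :=
  ofLex ((lmSet f).max' (lmSet_nonempty hf))

lemma lm_mem {f : Px n} (hf : f ≠ 0) : lm f hf ∈ f.support := by
  have h := Finset.max'_mem (lmSet f) (lmSet_nonempty hf)
  simp only [lmSet, Finset.mem_map, Equiv.coe_toEmbedding] at h
  obtain ⟨s, hs, hst⟩ := h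
  have heq : lm f hf = s := (congrArg ofLex hst).symm
  rwa [heq]

lemma coeff_lm_ne_zero {f : Px n} (hf : f ≠ 0) : MvPolynomial.coeff (lm f hf) f ≠ 0 :=
  MvPolynomial.mem_support_iff.mp (lm_mem hf)

lemma lm_le {f : Px n} (hf : f ≠ 0) {s : Fin (n+1) →₀ ℕ} (hs : s ∈ f.support) :
    toLex s ≤ toLex (lm f hf) := by
  have hmem : toLex s ∈ lmSet f := by
    simp only [lmSet, Finset.mem_map, Equiv.coe_toEmbedding]
    exact ⟨s, hs, rfl⟩
  have h := Finset.le_max' (lmSet f) _ hmem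
  have he : toLex (lm f hf) = (lmSet f).max' (lmSet_nonempty hf) := rfl
  rwa [he]

lemma lm_eq_of {f : Px n} (hf : f ≠ 0) {m : Fin (n+1) →₀ ℕ}
    (hmem : m ∈ f.support) (hmax : ∀ s ∈ f.support, toLex s ≤ toLex m) :
    lm f hf = m := by
  have h1 := lm_le hf hmem
  have h2 := hmax _ (lm_mem hf)
  exact toLex.injective (le_antisymm h2 h1)

lemma mul_monomial_ne_zero {f : Px n} (hf : f ≠ 0) (s : Fin (n+1) →₀ ℕ) :
    f * MvPolynomial.monomial s 1 ≠ 0 := by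
  intro h
  apply coeff_lm_ne_zero hf
  have hc : MvPolynomial.coeff (lm f hf + s) (f * MvPolynomial.monomial s 1)
      = MvPolynomial.coeff (lm f hf) f := by
    rw [MvPolynomial.coeff_mul_monomial, mul_one]
  rw [h, MvPolynomial.coeff_zero] at hc
  exact hc.symm

lemma lm_mul_monomial {f : Px n} (hf : f ≠ 0) (s : Fin (n+1) →₀ ℕ) :
    lm (f * MvPolynomial.monomial s 1) (mul_monomial_ne_zero hf s) = lm f hf + s := by
  apply lm_eq_of
  · rw [MvPolynomial.mem_support_iff, MvPolynomial.coeff_mul_monomial, mul_one]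
    exact coeff_lm_ne_zero hf
  · intro t ht
    rw [MvPolynomial.mem_support_iff, MvPolynomial.coeff_mul_monomial'] at ht
    by_cases hle : s ≤ t
    · rw [if_pos hle, mul_one] at ht
      have hsup : t - s ∈ f.support := MvPolynomial.mem_support_iff.mpr ht
      have h1 := lm_le hf hsup
      have h2 : toLex (t - s) + toLex s ≤ toLex (lm f hf) + toLex s :=
        add_le_add_left h1 _
      rw [← toLex_add', ← toLex_add', tsub_add_cancel_of_le hle] at h2
      exact h2
    · rw [if_neg hle] at ht
      exact absurd rfl ht

lemma lm_monomial (m : Fin (n+1) →₀ ℕ) (h : (MvPolynomial.monomial m (1:ℂ)) ≠ 0) :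
    lm (MvPolynomial.monomial m (1:ℂ)) h = m := by
  have hm := lm_mem h
  rw [MvPolynomial.support_monomial] at hm
  simp only [one_ne_zero, if_false, Finset.mem_singleton] at hm
  exact hm

/-! ### Coefficient projections -/

noncomputable def coeffLM (m : Fin (n+1) →₀ ℕ) : Px n →ₗ[ℂ] ℂ where
  toFun p := MvPolynomial.coeff m p
  map_add' p q := MvPolynomial.coeff_add m p q
  map_smul' c p := MvPolynomial.coeff_smul m c p

lemma inj_coeff_proj (V : Submodule ℂ (Px n)) (T : Finset (Fin (n+1) →₀ ℕ))
    (h : ∀ f ∈ V, ∀ hf : f ≠ 0, lm f hf ∈ T) :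
    Function.Injective
      (LinearMap.pi (fun m : {x // x ∈ T} => (coeffLM m.1).comp V.subtype)) := by
  rw [← LinearMap.ker_eq_bot, LinearMap.ker_eq_bot']
  intro u hu
  by_contra hu0
  have hne : (u : Px n) ≠ 0 := fun hh => hu0 (Subtype.ext hh)
  have hmem := h u u.2 hne
  have hz : MvPolynomial.coeff (lm (u : Px n) hne) (u : Px n) = 0 := by
    have := congrFun hu ⟨_, hmem⟩
    simpa [coeffLM] using this
  exact coeff_lm_ne_zero hne hz

lemma lm_mem_Mon {d : ℕ} {f : Px n} (hfd : f ∈ homogeneousSubmodule (Fin (n+1)) ℂ d)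
    (hf : f ≠ 0) : lm f hf ∈ Mon n d := by
  rw [mem_Mon]
  by_contra h
  exact coeff_lm_ne_zero hf
    (((mem_homogeneousSubmodule d f).mp hfd).coeff_eq_zero h)

lemma fd_homog (d : ℕ) : FiniteDimensional ℂ (homogeneousSubmodule (Fin (n+1)) ℂ d) :=
  FiniteDimensional.of_injective
    (LinearMap.pi (fun m : {x // x ∈ Mon n d} =>
      (coeffLM m.1).comp (homogeneousSubmodule (Fin (n+1)) ℂ d).subtype))
    (inj_coeff_proj _ _ (fun f hf hf0 => lm_mem_Mon hf hf0))

lemma finrank_le_card (V : Submodule ℂ (Px n)) (T : Finset (Fin (n+1) →₀ ℕ))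
    (h : ∀ f ∈ V, ∀ hf : f ≠ 0, lm f hf ∈ T) :
    finrank ℂ V ≤ T.card := by
  calc finrank ℂ V ≤ finrank ℂ ({x // x ∈ T} → ℂ) :=
        LinearMap.finrank_le_finrank_of_injective (inj_coeff_proj V T h)
    _ = T.card := by
        rw [Module.finrank_fintype_fun_eq_card, Fintype.card_coe]

lemma card_le_finrank {V : Submodule ℂ (Px n)} [Module.Finite ℂ V]
    {T : Finset (Fin (n+1) →₀ ℕ)} (F : (Fin (n+1) →₀ ℕ) → Px n)
    (hFV : ∀ m ∈ T, F m ∈ V) (hF0 : ∀ m ∈ T, F m ≠ 0)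
    (hlm : ∀ m, ∀ h : m ∈ T, lm (F m) (hF0 m h) = m) :
    T.card ≤ finrank ℂ V := by
  classical
  have hli : LinearIndependent ℂ (fun m : {x // x ∈ T} => (⟨F m.1, hFV m.1 m.2⟩ : V)) := by
    apply LinearIndependent.of_comp V.subtype
    have hcomp : (V.subtype ∘ fun m : {x // x ∈ T} => (⟨F m.1, hFV m.1 m.2⟩ : V))
        = fun m : {x // x ∈ T} => F m.1 := rfl
    rw [hcomp, Fintype.linearIndependent_iff]
    intro g hg
    by_contra hgn
    push_neg at hgn
    obtain ⟨m₀, hm₀⟩ := hgn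
    set sbad : Finset {x // x ∈ T} := Finset.univ.filter (fun m => g m ≠ 0) with hsbad
    have hsne : sbad.Nonempty := ⟨m₀, by simp [hsbad, hm₀]⟩
    set sLex : Finset (Lex (Fin (n+1) →₀ ℕ)) := sbad.image (fun m => toLex m.1) with hsLex
    have hsLexne : sLex.Nonempty := hsne.image _
    obtain ⟨mstar, hmstar_s, hmstar_eq⟩ :
        ∃ m ∈ sbad, toLex m.1 = sLex.max' hsLexne := by
      obtain ⟨m, hm, he⟩ := Finset.mem_image.mp (Finset.max'_mem sLex hsLexne)
      exact ⟨m, hm, he⟩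
    have hmax : ∀ m ∈ sbad, toLex m.1 ≤ toLex mstar.1 := by
      intro m hm
      rw [hmstar_eq]
      exact Finset.le_max' sLex (toLex m.1) (Finset.mem_image_of_mem _ hm)
    have h0 : MvPolynomial.coeff mstar.1 (∑ m, g m • F m.1) = 0 := by
      rw [hg, MvPolynomial.coeff_zero]
    rw [MvPolynomial.coeff_sum] at h0
    have hterm : ∀ m : {x // x ∈ T}, m ≠ mstar →
        MvPolynomial.coeff mstar.1 (g m • F m.1) = 0 := by
      intro m hm
      by_cases hgm : g m = 0
      · rw [hgm, zero_smul, MvPolynomial.coeff_zero]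
      · have hmem : m ∈ sbad := by simp [hsbad, hgm]
        have hle := hmax m hmem
        have hcz : MvPolynomial.coeff mstar.1 (F m.1) = 0 := by
          by_contra hcc
          have hsup : (mstar.1 : Fin (n+1) →₀ ℕ) ∈ (F m.1).support :=
            MvPolynomial.mem_support_iff.mpr hcc
          have h2 := lm_le (hF0 m.1 m.2) hsup
          rw [hlm m.1 m.2] at h2
          exact hm (Subtype.ext (toLex.injective (le_antisymm hle h2)))
        rw [MvPolynomial.coeff_smul, hcz, smul_zero]
    rw [Finset.sum_eq_single mstar (fun b _ hb => hterm b hb)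
      (fun hb => absurd (Finset.mem_univ mstar) hb)] at h0
    have hg0 : g mstar ≠ 0 := by
      have := hmstar_s
      simp only [hsbad, Finset.mem_filter] at this
      exact this.2
    have hc0 : MvPolynomial.coeff mstar.1 (F mstar.1) ≠ 0 := by
      have hmm := lm_mem (hF0 mstar.1 mstar.2)
      rw [hlm mstar.1 mstar.2] at hmm
      exact MvPolynomial.mem_support_iff.mp hmm
    rw [MvPolynomial.coeff_smul] at h0
    exact hg0 (by simpa [hc0] using h0)
  have h := hli.fintype_card_le_finrank
  simpa [Fintype.card_coe] using h

end KS


/-- The pair of line bundles `O(i) < O(i+j)` on `ℙⁿ` is strongly Kronecker stable, stated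
via global sections, i.e. spaces of homogeneous polynomials of degrees `i`, `j`, `i+j` in
`n+1` variables: (1) the multiplication map `S_i ⊗ S_j → S_{i+j}` is surjective, and
(2) for every subspace `0 ≠ U ⊊ S_i`, the span `U·S_j` of products satisfies
`dim(U·S_j) · C(i+n,n) > dim(U) · C(i+j+n,n)`. -/
theorem stmt0 (n i j : ℕ) (hn : 1 ≤ n) (hj : 1 ≤ j) :
    (homogeneousSubmodule (Fin (n+1)) ℂ (i+j) ≤
      homogeneousSubmodule (Fin (n+1)) ℂ i * homogeneousSubmodule (Fin (n+1)) ℂ j) ∧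
    (∀ U : Submodule ℂ (MvPolynomial (Fin (n+1)) ℂ),
      U ≠ ⊥ → U < homogeneousSubmodule (Fin (n+1)) ℂ i →
      Module.finrank ℂ ↥(U * homogeneousSubmodule (Fin (n+1)) ℂ j) * (i+n).choose n >
        Module.finrank ℂ ↥U * (i+j+n).choose n) := by
  classical
  constructor
  · -- surjectivity of multiplication
    intro p hp
    rw [mem_homogeneousSubmodule] at hp
    rw [← p.support_sum_monomial_coeff]
    apply Submodule.sum_mem
    intro s hs
    have hdeg : s.degree = i + j := by
      by_contra h
      exact (MvPolynomial.mem_support_iff.mp hs) (hp.coeff_eq_zero h)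
    obtain ⟨u, v, rfl, hu⟩ := KS.exists_split i s (by omega)
    have hv : v.degree = j := by have := KS.deg_add u v; omega
    have hfac : (MvPolynomial.monomial (u + v)) (MvPolynomial.coeff (u + v) p)
        = (MvPolynomial.monomial u (MvPolynomial.coeff (u + v) p))
          * (MvPolynomial.monomial v (1:ℂ)) := by
      rw [MvPolynomial.monomial_mul, mul_one]
    rw [hfac]
    exact Submodule.mul_mem_mul
      ((mem_homogeneousSubmodule _ _).mpr (isHomogeneous_monomial _ hu))
      ((mem_homogeneousSubmodule _ _).mpr (isHomogeneous_monomial _ hv))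
  · -- Kronecker stability inequality
    intro U hUbot hUlt
    haveI hfdi := KS.fd_homog (n := n) i
    haveI hfdij := KS.fd_homog (n := n) (i + j)
    have hUle : U ≤ homogeneousSubmodule (Fin (n+1)) ℂ i := le_of_lt hUlt
    haveI hfdU : FiniteDimensional ℂ U := Submodule.finiteDimensional_of_le hUle
    have hVle : U * homogeneousSubmodule (Fin (n+1)) ℂ j
        ≤ homogeneousSubmodule (Fin (n+1)) ℂ (i + j) :=
      le_trans (mul_le_mul' hUle (le_refl _)) (homogeneousSubmodule_mul i j)
    haveI hfdV : FiniteDimensional ℂ (U * homogeneousSubmodule (Fin (n+1)) ℂ j) :=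
      Submodule.finiteDimensional_of_le hVle
    -- the set of leading monomials of U
    set T : Finset (Fin (n+1) →₀ ℕ) :=
      (KS.Mon n i).filter (fun m => ∃ f, f ∈ U ∧ ∃ h : f ≠ 0, KS.lm f h = m) with hT
    have hTsub : T ⊆ KS.Mon n i := Finset.filter_subset _ _
    have hlmU : ∀ f ∈ U, ∀ hf : f ≠ 0, KS.lm f hf ∈ T := by
      intro f hfU hf
      rw [hT, Finset.mem_filter]
      exact ⟨KS.lm_mem_Mon (hUle hfU) hf, f, hfU, hf, rfl⟩
    have hTne : T.Nonempty := by
      obtain ⟨f, hfU, hf⟩ := Submodule.exists_mem_ne_zero_of_ne_bot hUbot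
      exact ⟨KS.lm f hf, hlmU f hfU hf⟩
    -- choice of witnesses
    set F : (Fin (n+1) →₀ ℕ) → KS.Px n := fun m =>
      if h : ∃ f, f ∈ U ∧ ∃ hf : f ≠ 0, KS.lm f hf = m then h.choose else 0 with hF
    have hFspec : ∀ m ∈ T, F m ∈ U ∧ ∃ hf : F m ≠ 0, KS.lm (F m) hf = m := by
      intro m hm
      rw [hT, Finset.mem_filter] at hm
      obtain ⟨-, hex⟩ := hm
      rw [hF]
      simp only [dif_pos hex]
      obtain ⟨h1, h2⟩ := hex.choose_spec
      exact ⟨h1, h2⟩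
    have hFU : ∀ m ∈ T, F m ∈ U := fun m hm => (hFspec m hm).1
    have hF0 : ∀ m ∈ T, F m ≠ 0 := fun m hm => (hFspec m hm).2.choose
    have hFlm : ∀ m, ∀ h : m ∈ T, KS.lm (F m) (hF0 m h) = m :=
      fun m hm => (hFspec m hm).2.choose_spec
    -- T.card = finrank U
    have h1 : T.card ≤ Module.finrank ℂ U := KS.card_le_finrank F hFU hF0 hFlm
    have h2 : Module.finrank ℂ U ≤ T.card := KS.finrank_le_card U T hlmU
    have hcardT : T.card = Module.finrank ℂ U := le_antisymm h1 h2
    -- T is proper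
    have hTproper : T ≠ KS.Mon n i := by
      intro h
      have hlt : Module.finrank ℂ U
          < Module.finrank ℂ (homogeneousSubmodule (Fin (n+1)) ℂ i) :=
        Submodule.finrank_lt_finrank_of_lt hUlt
      have hfr : Module.finrank ℂ (homogeneousSubmodule (Fin (n+1)) ℂ i)
          = (KS.Mon n i).card := by
        refine le_antisymm (KS.finrank_le_card _ _ (fun f hf hf0 => KS.lm_mem_Mon hf hf0)) ?_
        haveI := KS.fd_homog (n := n) i
        refine KS.card_le_finrank (fun m => MvPolynomial.monomial m (1:ℂ)) ?_ ?_ ?_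
        · intro m hm
          exact (mem_homogeneousSubmodule _ _).mpr
            (isHomogeneous_monomial _ (KS.mem_Mon.mp hm))
        · intro m hm
          simp [MvPolynomial.monomial_eq_zero]
        · intro m hm
          exact KS.lm_monomial m _
      rw [h] at hcardT
      omega
    -- lower bound for U * S_j
    have h3 : (T + KS.Mon n j).card
        ≤ Module.finrank ℂ (U * homogeneousSubmodule (Fin (n+1)) ℂ j) := by
      set F' : (Fin (n+1) →₀ ℕ) → KS.Px n := fun p =>
        if h : ∃ ms : (Fin (n+1) →₀ ℕ) × (Fin (n+1) →₀ ℕ),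
            ms.1 ∈ T ∧ ms.2 ∈ KS.Mon n j ∧ ms.1 + ms.2 = p then
          F h.choose.1 * MvPolynomial.monomial h.choose.2 1
        else 0 with hF'
      have hdec : ∀ p ∈ T + KS.Mon n j,
          ∃ ms : (Fin (n+1) →₀ ℕ) × (Fin (n+1) →₀ ℕ),
            ms.1 ∈ T ∧ ms.2 ∈ KS.Mon n j ∧ ms.1 + ms.2 = p := by
        intro p hp
        rw [Finset.mem_add] at hp
        obtain ⟨y, hy, z, hz, hyz⟩ := hp
        exact ⟨(y, z), hy, hz, hyz⟩
      have hF'spec : ∀ p ∈ T + KS.Mon n j,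
          F' p ∈ U * homogeneousSubmodule (Fin (n+1)) ℂ j
          ∧ ∃ hf : F' p ≠ 0, KS.lm (F' p) hf = p := by
        intro p hp
        have hex := hdec p hp
        rw [hF']
        simp only [dif_pos hex]
        obtain ⟨hm1, hm2, hm3⟩ := hex.choose_spec
        have hmul_ne : F hex.choose.1 * MvPolynomial.monomial hex.choose.2 1 ≠ 0 :=
          KS.mul_monomial_ne_zero (hF0 _ hm1) _
        refine ⟨?_, hmul_ne, ?_⟩
        · exact Submodule.mul_mem_mul (hFU _ hm1)
            ((mem_homogeneousSubmodule _ _).mpr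
              (isHomogeneous_monomial _ (KS.mem_Mon.mp hm2)))
        · rw [KS.lm_mul_monomial (hF0 _ hm1), hFlm _ hm1, hm3]
      exact KS.card_le_finrank F' (fun p hp => (hF'spec p hp).1)
        (fun p hp => (hF'spec p hp).2.choose)
        (fun p hp => (hF'spec p hp).2.choose_spec)
    -- combinatorial inequality
    have hcomb := KS.shadow_gen j hj i T hTsub hTne hTproper
    rw [KS.card_Mon, KS.card_Mon] at hcomb
    -- conclude
    have hfinal : Module.finrank ℂ U * (i+j+n).choose n
        < Module.finrank ℂ (U * homogeneousSubmodule (Fin (n+1)) ℂ j) * (i+n).choose n := by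
      calc Module.finrank ℂ U * (i+j+n).choose n
          = T.card * (i+j+n).choose n := by rw [hcardT]
        _ < (T + KS.Mon n j).card * (i+n).choose n := hcomb
        _ ≤ Module.finrank ℂ (U * homogeneousSubmodule (Fin (n+1)) ℂ j) * (i+n).choose n :=
            Nat.mul_le_mul_right _ h3
    exact hfinal
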